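/- Let φ: C → C be a gauge-reversing map on a proper open convex cone with fixed point b. Then b is an isolated fixed point of φ if and only if the projective class of b is an isolated fixed point of the induced action of φ on the projective space P(C) of the cone. -/

import Mathlib

open Set Filter

/-- The gauge of a cone: `M_C(x,y) = inf {λ > 0 | λ • y - x ∈ closure C}`. -/
noncomputable def coneGauge {V : Type*} [NormedAddCommGroup V] [NormedSpace ℝ V]
    (C : Set V) (x y : V) : ℝ :=
  sInf {l : ℝ | 0 < l ∧ l • y - x ∈ closure C}

/-- A proper open convex cone. -/
def IsProperCone {V : Type*} [NormedAddCommGroup V] [NormedSpace ℝ V] (C : Set V) : Prop :=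
  C.Nonempty ∧ IsOpen C ∧ Convex ℝ C ∧ (∀ x ∈ C, ∀ l : ℝ, 0 < l → l • x ∈ C) ∧
    closure C ∩ (-(closure C)) ⊆ {0}

/-- Hilbert's projective metric `d_H(x,y) = log (M_C(x,y) M_C(y,x))`. -/
noncomputable def hilbertDist {V : Type*} [NormedAddCommGroup V] [NormedSpace ℝ V]
    (C : Set V) (x y : V) : ℝ :=
  Real.log (coneGauge C x y * coneGauge C y x)

section Aux
variable {V : Type*} [NormedAddCommGroup V] [NormedSpace ℝ V] {C : Set V}

theorem pc_zero_mem (hC : IsProperCone C) : (0:V) ∈ closure C := by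
  obtain ⟨⟨x, hx⟩, _, _, hcone, _⟩ := hC
  have h1 : Tendsto (fun n : ℕ => (1/(n+1:ℝ)) • x) atTop (nhds 0) := by
    have := tendsto_one_div_add_atTop_nhds_zero_nat (𝕜 := ℝ)
    simpa using this.smul_const x
  refine mem_closure_of_tendsto h1 (Eventually.of_forall fun n => ?_)
  exact hcone x hx _ (by positivity)


theorem pc_smul_cl (hC : IsProperCone C) {l : ℝ} (hl : 0 < l) {u : V}
    (hu : u ∈ closure C) : l • u ∈ closure C := by
  obtain ⟨_, _, _, hcone, _⟩ := hC
  have : Set.MapsTo (fun z : V => l • z) (closure C) (closure C) :=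
    (Set.MapsTo.closure (fun z hz => hcone z hz l hl) (continuous_const_smul l))
  exact this hu


theorem pc_smul_cl' (hC : IsProperCone C) {l : ℝ} (hl : 0 ≤ l) {u : V}
    (hu : u ∈ closure C) : l • u ∈ closure C := by
  rcases eq_or_lt_of_le hl with h | h
  · simpa [← h] using pc_zero_mem hC
  · exact pc_smul_cl hC h hu


theorem pc_add_cl (hC : IsProperCone C) {u v : V} (hu : u ∈ closure C)
    (hv : v ∈ closure C) : u + v ∈ closure C := by
  have hconv := hC.2.2.1.closure
  have h2 : (1/2:ℝ) • u + (1/2:ℝ) • v ∈ closure C :=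
    hconv hu hv (by norm_num) (by norm_num) (by norm_num)
  have := pc_smul_cl hC (by norm_num : (0:ℝ) < 2) h2
  simpa [smul_add, smul_smul] using this


theorem pc_eq_zero (hC : IsProperCone C) {u : V} (hu : u ∈ closure C)
    (hu' : -u ∈ closure C) : u = 0 := by
  have := hC.2.2.2.2 ⟨hu, by simpa using hu'⟩
  simpa using this


theorem pc_gauge_key (hC : IsProperCone C) (h0 : (0:V) ∉ C) {x y : V}
    (hx : x ∈ C) (hy : y ∈ C) :
    0 < coneGauge C x y ∧ (coneGauge C x y) • y - x ∈ closure C ∧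
      ∀ l : ℝ, 0 < l → l • y - x ∈ closure C → coneGauge C x y ≤ l := by
  set S := {l : ℝ | 0 < l ∧ l • y - x ∈ closure C} with hS
  have hne : S.Nonempty := by
    have h1 : Tendsto (fun l : ℝ => y - l⁻¹ • x) atTop (nhds y) := by
      have := (tendsto_inv_atTop_zero (𝕜 := ℝ)).smul_const x
      simpa using tendsto_const_nhds.sub this
    have h2 : ∀ᶠ l : ℝ in atTop, y - l⁻¹ • x ∈ C :=
      h1.eventually (hC.2.1.eventually_mem hy)
    obtain ⟨l, hl1, hl2⟩ := (h2.and (eventually_gt_atTop 0)).exists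
    refine ⟨l, hl2, subset_closure ?_⟩
    have := hC.2.2.2.1 _ hl1 l hl2
    have he : l • (y - l⁻¹ • x) = l • y - x := by
      rw [smul_sub, smul_smul, mul_inv_cancel₀ hl2.ne', one_smul]
    rwa [he] at this
  have hbdd : BddBelow S := ⟨0, fun l hl => le_of_lt hl.1⟩
  have hm0 : 0 ≤ sInf S := le_csInf hne fun l hl => le_of_lt hl.1
  have hmemS : (sInf S) • y - x ∈ closure C := by
    have hmem : ∀ n : ℕ, (sInf S + 1/(n+1)) • y - x ∈ closure C := by
      intro n
      obtain ⟨a, haS, ha⟩ := Real.lt_sInf_add_pos hne (by positivity : (0:ℝ) < 1/(n+1))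
      have h3 : (sInf S + 1/(n+1) - a) • y ∈ closure C :=
        pc_smul_cl' hC (by linarith) (subset_closure hy)
      have := pc_add_cl hC h3 haS.2
      have he : (sInf S + 1/(n+1) - a) • y + (a • y - x) = (sInf S + 1/(n+1)) • y - x := by
        rw [sub_smul, add_smul]; abel
      rwa [he] at this
    have h1 : Tendsto (fun n : ℕ => (sInf S + 1/(n+1:ℝ)) • y - x) atTop
        (nhds ((sInf S) • y - x)) := by
      have h2 : Tendsto (fun n : ℕ => sInf S + 1/(n+1:ℝ)) atTop (nhds (sInf S)) := by
        have := tendsto_one_div_add_atTop_nhds_zero_nat (𝕜 := ℝ)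
        simpa using tendsto_const_nhds.add this
      exact (h2.smul_const y).sub tendsto_const_nhds
    exact isClosed_closure.mem_of_tendsto h1 (Eventually.of_forall hmem)
  have hpos : 0 < sInf S := by
    rcases eq_or_lt_of_le hm0 with h | h
    · exfalso
      have h1 : -x ∈ closure C := by simpa [← h] using hmemS
      have : x = 0 := pc_eq_zero hC (subset_closure hx) h1
      exact h0 (this ▸ hx)
    · exact h
  exact ⟨hpos, hmemS, fun l hl hmem => csInf_le hbdd ⟨hl, hmem⟩⟩


theorem pc_gauge_mul_ge_one (hC : IsProperCone C) (h0 : (0:V) ∉ C) {x y : V}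
    (hx : x ∈ C) (hy : y ∈ C) : 1 ≤ coneGauge C x y * coneGauge C y x := by
  obtain ⟨hm, hmem, _⟩ := pc_gauge_key hC h0 hx hy
  obtain ⟨hm', hmem', _⟩ := pc_gauge_key hC h0 hy hx
  set m := coneGauge C x y
  set m' := coneGauge C y x
  have h1 : (m' * m - 1) • y ∈ closure C := by
    have := pc_add_cl hC (pc_smul_cl hC hm' hmem) hmem'
    have he : m' • (m • y - x) + (m' • x - y) = (m' * m - 1) • y := by
      rw [smul_sub, smul_smul, sub_smul, one_smul]; abel
    rwa [he] at this
  by_contra h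
  push_neg at h
  have h2 : (1 - m * m') • y ∈ closure C :=
    pc_smul_cl hC (by linarith) (subset_closure hy)
  have h3 : y = 0 := by
    have h4 : (1 - m * m') • y = 0 := by
      refine pc_eq_zero hC h2 ?_
      have : -((1 - m * m') • y) = (m' * m - 1) • y := by
        rw [← neg_smul]; ring_nf
      rwa [this]
    rcases smul_eq_zero.1 h4 with h5 | h5
    · exfalso; apply absurd h5; intro h6; nlinarith
    · exact h5
  exact h0 (h3 ▸ hy)


theorem pc_gauge_self (hC : IsProperCone C) (h0 : (0:V) ∉ C) {x : V}
    (hx : x ∈ C) : coneGauge C x x = 1 := by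
  obtain ⟨hm, _, hle⟩ := pc_gauge_key hC h0 hx hx
  have h1 : coneGauge C x x ≤ 1 := by
    refine hle 1 one_pos ?_
    simpa using pc_zero_mem hC
  have h2 := pc_gauge_mul_ge_one hC h0 hx hx
  nlinarith


theorem pc_gauge_eq (hC : IsProperCone C) (h0 : (0:V) ∉ C) {x y : V}
    (hx : x ∈ C) (hy : y ∈ C) (hprod : coneGauge C x y * coneGauge C y x = 1) :
    x = (coneGauge C x y) • y := by
  obtain ⟨hm, hmem, _⟩ := pc_gauge_key hC h0 hx hy
  obtain ⟨hm', hmem', _⟩ := pc_gauge_key hC h0 hy hx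
  set m := coneGauge C x y
  set m' := coneGauge C y x
  have h1 : x - m • y ∈ closure C := by
    have := pc_smul_cl hC hm hmem'
    have he : m • (m' • x - y) = x - m • y := by
      rw [smul_sub, smul_smul, hprod, one_smul]
    rwa [he] at this
  have h2 : m • y - x = 0 := by
    refine pc_eq_zero hC hmem ?_
    simpa [neg_sub] using h1
  exact (sub_eq_zero.1 h2).symm


theorem pc_gauge_smul_left (hC : IsProperCone C) (h0 : (0:V) ∉ C) {x y : V}
    (hx : x ∈ C) (hy : y ∈ C) {a : ℝ} (ha : 0 < a) :
    coneGauge C (a • x) y = a * coneGauge C x y := by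
  have hax : a • x ∈ C := hC.2.2.2.1 x hx a ha
  obtain ⟨hm, hmem, hle⟩ := pc_gauge_key hC h0 hx hy
  obtain ⟨hn, hnmem, hnle⟩ := pc_gauge_key hC h0 hax hy
  set m := coneGauge C x y
  set n := coneGauge C (a • x) y
  have h1 : n ≤ a * m := by
    refine hnle _ (by positivity) ?_
    have := pc_smul_cl hC ha hmem
    have he : a • (m • y - x) = (a * m) • y - a • x := by
      rw [smul_sub, smul_smul]
    rwa [he] at this
  have h2 : m ≤ a⁻¹ * n := by
    refine hle _ (by positivity) ?_
    have := pc_smul_cl hC (inv_pos.2 ha) hnmem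
    have he : a⁻¹ • (n • y - a • x) = (a⁻¹ * n) • y - x := by
      rw [smul_sub, smul_smul, smul_smul, inv_mul_cancel₀ ha.ne', one_smul]
    rwa [he] at this
  have h3 : a * m ≤ n := by
    have := mul_le_mul_of_nonneg_left h2 ha.le
    rwa [← mul_assoc, mul_inv_cancel₀ ha.ne', one_mul] at this
  exact le_antisymm h1 h3


theorem pc_bounded (hC : IsProperCone C) [FiniteDimensional ℝ V] {w : V}
    (hw : w ∈ closure C) :
    Bornology.IsBounded (closure C ∩ {z : V | w - z ∈ closure C}) := by
  by_contra hbd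
  rw [isBounded_iff_forall_norm_le] at hbd
  push_neg at hbd
  have hz : ∀ n : ℕ, ∃ z ∈ closure C ∩ {z : V | w - z ∈ closure C}, (n:ℝ) + 1 < ‖z‖ :=
    fun n => hbd ((n:ℝ) + 1)
  choose z hz1 hz2 using hz
  have hzn : ∀ n, (0:ℝ) < ‖z n‖ := fun n => lt_of_le_of_lt (by positivity) (hz2 n)
  set u : ℕ → V := fun n => ‖z n‖⁻¹ • z n with hu
  have husph : ∀ n, u n ∈ Metric.sphere (0:V) 1 := by
    intro n
    simp [hu, norm_smul, abs_of_pos (inv_pos.2 (hzn n)), inv_mul_cancel₀ (hzn n).ne']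
  obtain ⟨l, hl, ψ, hψ, hlim⟩ := (isCompact_sphere (0:V) 1).tendsto_subseq husph
  have hinv : Tendsto (fun n => ‖z (ψ n)‖⁻¹) atTop (nhds 0) := by
    have h1 : ∀ n : ℕ, ‖z (ψ n)‖⁻¹ ≤ 1/((n:ℝ)+1) := by
      intro n
      rw [one_div]
      refine inv_anti₀ (by positivity) ?_
      calc (n:ℝ) + 1 ≤ (ψ n : ℝ) + 1 := by
            have h : n ≤ ψ n := hψ.le_apply
            have : (n:ℝ) ≤ (ψ n : ℝ) := Nat.cast_le.2 h
            linarith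
        _ ≤ ‖z (ψ n)‖ := (hz2 (ψ n)).le
    have h2 : ∀ n : ℕ, (0:ℝ) ≤ ‖z (ψ n)‖⁻¹ := fun n => (inv_pos.2 (hzn _)).le
    exact squeeze_zero h2 h1 (by simpa using tendsto_one_div_add_atTop_nhds_zero_nat (𝕜 := ℝ))
  have hlc : l ∈ closure C := by
    refine isClosed_closure.mem_of_tendsto hlim (Eventually.of_forall fun n => ?_)
    exact pc_smul_cl hC (inv_pos.2 (hzn _)) (hz1 (ψ n)).1
  have hlc' : -l ∈ closure C := by
    have hv : ∀ n : ℕ, ‖z (ψ n)‖⁻¹ • (w - z (ψ n)) ∈ closure C :=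
      fun n => pc_smul_cl hC (inv_pos.2 (hzn _)) (hz1 (ψ n)).2
    have hvt : Tendsto (fun n : ℕ => ‖z (ψ n)‖⁻¹ • (w - z (ψ n))) atTop (nhds (-l)) := by
      have he : ∀ n : ℕ, ‖z (ψ n)‖⁻¹ • (w - z (ψ n)) = ‖z (ψ n)‖⁻¹ • w - u (ψ n) := by
        intro n; rw [smul_sub]
      rw [show (-l : V) = 0 - l by abel]
      refine Tendsto.congr (fun n => (he n).symm) (Tendsto.sub ?_ hlim)
      simpa using hinv.smul_const w
    exact isClosed_closure.mem_of_tendsto hvt (Eventually.of_forall hv)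
  have : l = 0 := pc_eq_zero hC hlc hlc'
  rw [this] at hl
  simp at hl


theorem pc_interval (hC : IsProperCone C) [FiniteDimensional ℝ V] {b : V}
    (hb : b ∈ closure C) {ε : ℝ} (he : 0 < ε) :
    ∃ δ : ℝ, 1 < δ ∧ ∀ z : V, δ • b - z ∈ closure C → δ • z - b ∈ closure C →
      ‖z - b‖ < ε := by
  by_contra hcon
  push_neg at hcon
  have hz : ∀ n : ℕ, ∃ z : V, (1 + 1/((n:ℝ)+1)) • b - z ∈ closure C ∧
      (1 + 1/((n:ℝ)+1)) • z - b ∈ closure C ∧ ε ≤ ‖z - b‖ := by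
    intro n
    have hgt : (1:ℝ) < 1 + 1/((n:ℝ)+1) := by
      have : (0:ℝ) < 1/((n:ℝ)+1) := by positivity
      linarith
    obtain ⟨z, h1, h2, h3⟩ := hcon _ hgt
    exact ⟨z, h1, h2, h3⟩
  choose z hz1 hz2 hz3 using hz
  have hδ1 : ∀ n : ℕ, (1:ℝ) < 1 + 1/((n:ℝ)+1) := by
    intro n
    have : (0:ℝ) < 1/((n:ℝ)+1) := by positivity
    linarith
  have hδ2 : ∀ n : ℕ, (1 + 1/((n:ℝ)+1)) ≤ 2 := by
    intro n
    have h1 : (1:ℝ) ≤ (n:ℝ)+1 := by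
      have := Nat.cast_nonneg (α := ℝ) n
      linarith
    have : 1/((n:ℝ)+1) ≤ 1 := by
      rw [div_le_one (by positivity)]; exact h1
    linarith
  have hzK : ∀ n, z n ∈ closure C := by
    intro n
    have h1 := pc_add_cl hC (hz2 n) hb
    have h2 := pc_smul_cl hC (inv_pos.2 (lt_trans one_pos (hδ1 n))) h1
    have he : (1 + 1/((n:ℝ)+1))⁻¹ • ((1 + 1/((n:ℝ)+1)) • z n - b + b) = z n := by
      rw [sub_add_cancel, inv_smul_smul₀ (lt_trans one_pos (hδ1 n)).ne']
    rwa [he] at h2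
  have hK2 : ∀ n, (2:ℝ) • b - z n ∈ closure C := by
    intro n
    have h1 := pc_add_cl hC
      (pc_smul_cl' hC (l := 2 - (1 + 1/((n:ℝ)+1))) (by linarith [hδ2 n]) hb) (hz1 n)
    have he : (2 - (1 + 1/((n:ℝ)+1))) • b + ((1 + 1/((n:ℝ)+1)) • b - z n)
        = (2:ℝ) • b - z n := by
      rw [sub_smul]; abel
    rwa [he] at h1
  have hKcl : IsClosed (closure C ∩ {z : V | (2:ℝ) • b - z ∈ closure C}) := by
    refine isClosed_closure.inter ?_
    have : {z : V | (2:ℝ) • b - z ∈ closure C}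
        = (fun z : V => (2:ℝ) • b - z) ⁻¹' closure C := rfl
    rw [this]
    exact IsClosed.preimage (continuous_const.sub continuous_id) isClosed_closure
  have hKcp : IsCompact (closure C ∩ {z : V | (2:ℝ) • b - z ∈ closure C}) :=
    Metric.isCompact_of_isClosed_isBounded hKcl
      (pc_bounded hC (pc_smul_cl hC two_pos hb))
  obtain ⟨l, hlK, ψ, hψ, hlim⟩ := hKcp.tendsto_subseq (fun n => ⟨hzK n, hK2 n⟩)
  have hδψ : Tendsto (fun n : ℕ => 1 + 1/((ψ n:ℝ)+1)) atTop (nhds 1) := by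
    have h1 : Tendsto (fun n : ℕ => 1 + 1/((n:ℝ)+1)) atTop (nhds 1) := by
      have := tendsto_one_div_add_atTop_nhds_zero_nat (𝕜 := ℝ)
      simpa using tendsto_const_nhds.add this
    exact h1.comp hψ.tendsto_atTop
  have h1 : b - l ∈ closure C := by
    have ht : Tendsto (fun n : ℕ => (1 + 1/((ψ n:ℝ)+1)) • b - z (ψ n)) atTop
        (nhds (b - l)) := by
      have := (hδψ.smul_const b).sub hlim
      simpa using this
    exact isClosed_closure.mem_of_tendsto ht (Eventually.of_forall fun n => hz1 (ψ n))
  have h2 : l - b ∈ closure C := by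
    have ht : Tendsto (fun n : ℕ => (1 + 1/((ψ n:ℝ)+1)) • z (ψ n) - b) atTop
        (nhds (l - b)) := by
      have := (hδψ.smul hlim).sub (tendsto_const_nhds (x := b))
      simpa using this
    exact isClosed_closure.mem_of_tendsto ht (Eventually.of_forall fun n => hz2 (ψ n))
  have hlb : l = b := by
    have := pc_eq_zero hC h2 (by simpa [neg_sub] using h1)
    exact sub_eq_zero.1 this
  have hεle : ε ≤ ‖l - b‖ := by
    refine ge_of_tendsto ((hlim.sub (tendsto_const_nhds (x := b))).norm) ?_
    exact Eventually.of_forall fun n => hz3 (ψ n)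
  rw [hlb] at hεle
  simp at hεle
  linarith

theorem pc_gauge_smul_right (hC : IsProperCone C) (h0 : (0:V) ∉ C) {x y : V}
    (hx : x ∈ C) (hy : y ∈ C) {a : ℝ} (ha : 0 < a) :
    coneGauge C x (a • y) = a⁻¹ * coneGauge C x y := by
  have hay : a • y ∈ C := hC.2.2.2.1 y hy a ha
  obtain ⟨hm, hmem, hle⟩ := pc_gauge_key hC h0 hx hy
  obtain ⟨hn, hnmem, hnle⟩ := pc_gauge_key hC h0 hx hay
  set m := coneGauge C x y
  set n := coneGauge C x (a • y)
  have h1 : n ≤ a⁻¹ * m := by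
    refine hnle _ (by positivity) ?_
    have he : (a⁻¹ * m) • (a • y) - x = m • y - x := by
      rw [smul_smul, show a⁻¹ * m * a = m by field_simp]
    rwa [he]
  have h2 : m ≤ a * n := by
    refine hle _ (by positivity) ?_
    have he : (a * n) • y - x = n • (a • y) - x := by
      rw [smul_smul, mul_comm]
    rwa [he]
  have h3 : a⁻¹ * m ≤ n := by
    have := mul_le_mul_of_nonneg_left h2 (inv_pos.2 ha).le
    rwa [← mul_assoc, inv_mul_cancel₀ ha.ne', one_mul] at this
  exact le_antisymm h1 h3

end Aux

/-- For a gauge-reversing map `φ` with fixed point `b`, `b` is an isolated fixed point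
of `φ` iff the ray of `b` is an isolated fixed point of the induced projective action
(fixed rays being those `x ∈ C` with `φ x = μ • x` for some `μ > 0`, and projective
closeness measured by the Hilbert metric). -/
theorem isolated_fixed_point_iff_projective {V : Type*} [NormedAddCommGroup V]
    [NormedSpace ℝ V] [FiniteDimensional ℝ V] (C : Set V) (hC : IsProperCone C)
    (φ : V → V) (hmaps : Set.MapsTo φ C C)
    (hrev : ∀ x ∈ C, ∀ y ∈ C, coneGauge C (φ x) (φ y) = coneGauge C y x)
    (b : V) (hb : b ∈ C) (hfix : φ b = b) :
    (∃ ε > (0:ℝ), ∀ x ∈ C, φ x = x → dist x b < ε → x = b) ↔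
    (∃ ε > (0:ℝ), ∀ x ∈ C, (∃ μ : ℝ, 0 < μ ∧ φ x = μ • x) →
      hilbertDist C x b < ε → ∃ l : ℝ, 0 < l ∧ x = l • b) := by
  by_cases hsub : Subsingleton V
  · constructor
    · intro _
      exact ⟨1, one_pos, fun x _ _ _ => ⟨1, one_pos, Subsingleton.elim _ _⟩⟩
    · intro _
      exact ⟨1, one_pos, fun x _ _ _ => Subsingleton.elim x b⟩
  have h0 : (0:V) ∉ C := by
    intro h0mem
    have : Nontrivial V := not_subsingleton_iff_nontrivial.1 hsub
    obtain ⟨v, hv⟩ := exists_ne (0:V)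
    obtain ⟨r, hr, hball⟩ := Metric.isOpen_iff.1 hC.2.1 0 h0mem
    set w := (r/(2*‖v‖)) • v with hw
    have hvn : (0:ℝ) < ‖v‖ := norm_pos_iff.2 hv
    have hwn : ‖w‖ = r/2 := by
      rw [hw, norm_smul, Real.norm_eq_abs, abs_of_pos (by positivity)]
      field_simp
    have hwC : w ∈ C := by
      apply hball
      simp [Metric.mem_ball, dist_eq_norm, hwn]
      linarith
    have hwC' : -w ∈ C := by
      apply hball
      simp [Metric.mem_ball, dist_eq_norm, hwn]
      linarith
    have hw0 : w = 0 := pc_eq_zero hC (subset_closure hwC) (subset_closure hwC')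
    rw [hw, smul_eq_zero] at hw0
    rcases hw0 with h | h
    · rw [div_eq_zero_iff] at h
      rcases h with h | h
      · linarith
      · linarith
    · exact hv h
  have hφb : coneGauge C b b = 1 := pc_gauge_self hC h0 hb
  constructor
  · -- isolated fixed point → isolated fixed ray
    rintro ⟨ε₀, hε₀, hiso⟩
    obtain ⟨δ, hδ1, hδ⟩ := pc_interval hC (subset_closure hb) hε₀
    refine ⟨2 * Real.log δ, by have := Real.log_pos hδ1; linarith, ?_⟩
    intro x hx hfr hdist
    obtain ⟨μ, hμ, hφx⟩ := hfr
    set t := Real.sqrt μ with htdef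
    have ht : 0 < t := Real.sqrt_pos.2 hμ
    have ht2 : t * t = μ := Real.mul_self_sqrt hμ.le
    have htx : t • x ∈ C := hC.2.2.2.1 x hx t ht
    have hφxC : φ x ∈ C := hmaps hx
    have hφtxC : φ (t • x) ∈ C := hmaps htx
    have hMxx : coneGauge C x x = 1 := pc_gauge_self hC h0 hx
    have e1 : coneGauge C (φ (t • x)) (φ x) = t⁻¹ := by
      rw [hrev (t • x) htx x hx, pc_gauge_smul_right hC h0 hx hx ht, hMxx, mul_one]
    have e2 : coneGauge C (φ x) (φ (t • x)) = t := by
      rw [hrev x hx (t • x) htx, pc_gauge_smul_left hC h0 hx hx ht, hMxx, mul_one]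
    have hprod : coneGauge C (φ (t • x)) (φ x) * coneGauge C (φ x) (φ (t • x)) = 1 := by
      rw [e1, e2, inv_mul_cancel₀ ht.ne']
    have hφtx : φ (t • x) = t • x := by
      have := pc_gauge_eq hC h0 hφtxC hφxC hprod
      rw [e1, hφx, smul_smul] at this
      rw [this]
      congr 1
      rw [← ht2]
      field_simp
    set z := t • x with hz
    have hzC : z ∈ C := htx
    have hrevz := hrev z hzC b hb
    rw [hφtx, hfix] at hrevz
    -- hrevz : coneGauge C z b = coneGauge C b z
    obtain ⟨hmpos, hmem1, _⟩ := pc_gauge_key hC h0 hzC hb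
    obtain ⟨hm'pos, hmem2, _⟩ := pc_gauge_key hC h0 hb hzC
    -- hilbertDist z b = hilbertDist x b
    have hHd : coneGauge C z b * coneGauge C b z = coneGauge C x b * coneGauge C b x := by
      rw [hz, pc_gauge_smul_left hC h0 hx hb ht, pc_gauge_smul_right hC h0 hb hx ht]
      field_simp
    have hlt : coneGauge C z b * coneGauge C z b < δ * δ := by
      have h1 : Real.log (coneGauge C z b * coneGauge C z b) < Real.log (δ * δ) := by
        have := hdist
        rw [hilbertDist, ← hHd, ← hrevz] at this
        calc Real.log (coneGauge C z b * coneGauge C z b) < 2 * Real.log δ := this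
          _ = Real.log (δ * δ) := by
            rw [Real.log_mul (by linarith) (by linarith)]; ring
      have := (Real.log_lt_log_iff (by positivity) (by positivity)).1 h1
      exact this
    have hmδ : coneGauge C z b < δ := by nlinarith
    have hmem2' : coneGauge C z b • z - b ∈ closure C := by rw [hrevz]; exact hmem2
    have hp1 : δ • b - z ∈ closure C := by
      have := pc_add_cl hC
        (pc_smul_cl' hC (l := δ - coneGauge C z b) (by linarith) (subset_closure hb)) hmem1
      have he : (δ - coneGauge C z b) • b + (coneGauge C z b • b - z) = δ • b - z := by
        rw [sub_smul]; abel
      rwa [he] at this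
    have hp2 : δ • z - b ∈ closure C := by
      have := pc_add_cl hC
        (pc_smul_cl' hC (l := δ - coneGauge C z b) (by linarith) (subset_closure hzC)) hmem2'
      have he : (δ - coneGauge C z b) • z + (coneGauge C z b • z - b) = δ • z - b := by
        rw [sub_smul]; abel
      rwa [he] at this
    have hznorm : ‖z - b‖ < ε₀ := hδ z hp1 hp2
    have hzb : z = b := hiso z hzC hφtx (by rwa [dist_eq_norm])
    refine ⟨t⁻¹, inv_pos.2 ht, ?_⟩
    rw [← hzb, hz, inv_smul_smul₀ ht.ne']
  · -- isolated fixed ray → isolated fixed point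
    rintro ⟨ε, hε, hiso⟩
    set lam := Real.exp (ε/4) with hlam
    have hlam1 : 1 < lam := by
      rw [hlam]
      calc (1:ℝ) = Real.exp 0 := by simp
        _ < Real.exp (ε/4) := Real.exp_lt_exp.2 (by linarith)
    have hU : IsOpen ({x : V | lam • b - x ∈ C} ∩ {x : V | lam • x - b ∈ C}) := by
      refine IsOpen.inter ?_ ?_
      · exact hC.2.1.preimage (continuous_const.sub continuous_id)
      · exact hC.2.1.preimage ((continuous_const_smul lam).sub continuous_const)
    have hbU : b ∈ {x : V | lam • b - x ∈ C} ∩ {x : V | lam • x - b ∈ C} := by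
      have h1 : lam • b - b ∈ C := by
        have := hC.2.2.2.1 b hb (lam - 1) (by linarith)
        rwa [sub_smul, one_smul] at this
      exact ⟨h1, h1⟩
    obtain ⟨ε', hε', hball⟩ := Metric.isOpen_iff.1 hU b hbU
    refine ⟨ε', hε', ?_⟩
    intro x hx hφx hdist
    have hxU := hball (by rwa [Metric.mem_ball])
    obtain ⟨hU1, hU2⟩ := hxU
    obtain ⟨hmp, _, hle1⟩ := pc_gauge_key hC h0 hx hb
    obtain ⟨hm'p, _, hle2⟩ := pc_gauge_key hC h0 hb hx
    have h1 : coneGauge C x b ≤ lam := hle1 lam (by linarith) (subset_closure hU1)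
    have h2 : coneGauge C b x ≤ lam := hle2 lam (by linarith) (subset_closure hU2)
    have hHd : hilbertDist C x b < ε := by
      rw [hilbertDist]
      calc Real.log (coneGauge C x b * coneGauge C b x) ≤ Real.log (lam * lam) := by
            apply Real.log_le_log (by positivity)
            exact mul_le_mul h1 h2 hm'p.le (by linarith)
        _ = ε/2 := by
            rw [Real.log_mul (by linarith) (by linarith), hlam, Real.log_exp]; ring
        _ < ε := by linarith
    obtain ⟨l, hl, hxl⟩ := hiso x hx ⟨1, one_pos, by rw [hφx, one_smul]⟩ hHd
    have hMxb : coneGauge C x b = l := by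
      rw [hxl, pc_gauge_smul_left hC h0 hb hb hl, hφb, mul_one]
    have hMbx : coneGauge C b x = l⁻¹ := by
      rw [hxl, pc_gauge_smul_right hC h0 hb hb hl, hφb, mul_one]
    have hrv := hrev x hx b hb
    rw [hφx, hfix, hMxb, hMbx] at hrv
    -- hrv : l = l⁻¹  (coneGauge C x b = coneGauge C b x reversed?)
    have hl1 : l = 1 := by
      have hll : l * l = 1 := by
        nth_rewrite 2 [hrv]
        exact mul_inv_cancel₀ hl.ne'
      nlinarith
    rw [hxl, hl1, one_smul]
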